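/- For n ≥ 1 and 1 ≤ k ≤ n, the diameter of the coset space U(k)/U(k-1), with respect to the factor metric induced by the normalized trace metric on U(n) (embedding U(k) into U(n) as u ↦ u ⊕ 1_{n-k}), is at most 4/n. -/

import Mathlib

open Matrix
open scoped ComplexOrder

/-- The absolute value `|x| = (x*x)^{1/2}` of a complex matrix. -/
noncomputable def mAbs {n : ℕ} (x : Matrix (Fin n) (Fin n) ℂ) : Matrix (Fin n) (Fin n) ℂ :=
  (Matrix.posSemidef_conjTranspose_mul_self x).1.eigenvectorUnitary.1 *
    diagonal ((↑) ∘ (√·) ∘ (Matrix.posSemidef_conjTranspose_mul_self x).1.eigenvalues) *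
    (star (Matrix.posSemidef_conjTranspose_mul_self x).1.eigenvectorUnitary : Matrix (Fin n) (Fin n) ℂ)

/-- The normalized trace norm `‖x‖₁ = (1/n)·tr(|x|)`. -/
noncomputable def trNorm {n : ℕ} (x : Matrix (Fin n) (Fin n) ℂ) : ℝ :=
  (1 / (n : ℝ)) * (mAbs x).trace.re

/-- The operator norm of a matrix acting on `ℂⁿ`. -/
noncomputable def opNorm {n : ℕ} (x : Matrix (Fin n) (Fin n) ℂ) : ℝ :=
  ‖Matrix.toEuclideanCLM (𝕜 := ℂ) x‖

/-- The block-diagonal padding `u ⊕ 1_{n-k}` of a `k×k` matrix to an `n×n` matrix. -/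
def pad {k n : ℕ} (_h : k ≤ n) (u : Matrix (Fin k) (Fin k) ℂ) : Matrix (Fin n) (Fin n) ℂ :=
  fun i j =>
    if hi : (i : ℕ) < k then (if hj : (j : ℕ) < k then u ⟨i, hi⟩ ⟨j, hj⟩ else 0)
    else (if (i : ℕ) = (j : ℕ) then 1 else 0)

open scoped MatrixOrder in
lemma mAbs_eq_sqrt {n : ℕ} (x : Matrix (Fin n) (Fin n) ℂ) : mAbs x = CFC.sqrt (xᴴ * x) := by
  rw [CFC.sqrt_eq_cfc, cfc_nnreal_eq_real _ (xᴴ * x) (posSemidef_conjTranspose_mul_self x).nonneg,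
    (Matrix.posSemidef_conjTranspose_mul_self x).1.cfc_eq, IsHermitian.cfc,
    Unitary.conjStarAlgAut_apply, mAbs]
  congr 3
  funext i
  simp only [Function.comp_apply, Real.coe_sqrt,
    Real.coe_toNNReal _ ((posSemidef_conjTranspose_mul_self x).eigenvalues_nonneg i)]
  rfl

open scoped MatrixOrder in
lemma mAbs_eq {n : ℕ} {x M : Matrix (Fin n) (Fin n) ℂ} (hM : M.PosSemidef)
    (h : M * M = xᴴ * x) : mAbs x = M := by
  rw [mAbs_eq_sqrt]; exact CFC.sqrt_unique h hM.nonneg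

lemma posSemidef_trace_re_nonneg {n : ℕ} {M : Matrix (Fin n) (Fin n) ℂ}
    (hM : M.PosSemidef) : 0 ≤ M.trace.re := by
  rw [Matrix.trace]
  have : ∀ i, 0 ≤ (M.diag i).re := by
    intro i
    have := hM.re_dotProduct_nonneg (Pi.single i 1)
    simpa [Matrix.diag, dotProduct, Pi.single_apply] using this
  calc (0:ℝ) = Finset.univ.sum (fun _ : Fin n => (0:ℝ)) := by simp
  _ ≤ Finset.univ.sum (fun i => (M.diag i).re) := Finset.sum_le_sum fun i _ => this i
  _ = (Finset.univ.sum M.diag).re := by rw [Complex.re_sum]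

lemma trNorm_nonneg {n : ℕ} (x : Matrix (Fin n) (Fin n) ℂ) : 0 ≤ trNorm x := by
  apply mul_nonneg (by positivity)
  open scoped MatrixOrder in
  exact posSemidef_trace_re_nonneg (by rw [mAbs_eq_sqrt]; exact (CFC.sqrt_nonneg _).posSemidef)

lemma mAbs_mul_self {n : ℕ} (x : Matrix (Fin n) (Fin n) ℂ) :
    mAbs x * mAbs x = xᴴ * x := by
  open scoped MatrixOrder in
  rw [mAbs_eq_sqrt]; exact CFC.sqrt_mul_sqrt_self _ (posSemidef_conjTranspose_mul_self x).nonneg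

lemma mAbs_posSemidef {n : ℕ} (x : Matrix (Fin n) (Fin n) ℂ) : (mAbs x).PosSemidef := by
  open scoped MatrixOrder in
  rw [mAbs_eq_sqrt]; exact (CFC.sqrt_nonneg _).posSemidef

lemma trNorm_unitary_left {n : ℕ} {u : Matrix (Fin n) (Fin n) ℂ}
    (hu : uᴴ * u = 1) (x : Matrix (Fin n) (Fin n) ℂ) : trNorm (u * x) = trNorm x := by
  have : mAbs (u * x) = mAbs x := by
    apply mAbs_eq (mAbs_posSemidef x)
    rw [mAbs_mul_self, conjTranspose_mul, Matrix.mul_assoc, ← Matrix.mul_assoc uᴴ, hu,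
      Matrix.one_mul]
  rw [trNorm, this, trNorm]

lemma trNorm_unitary_right {n : ℕ} {u : Matrix (Fin n) (Fin n) ℂ}
    (hu : uᴴ * u = 1) (hu' : u * uᴴ = 1) (x : Matrix (Fin n) (Fin n) ℂ) :
    trNorm (x * u) = trNorm x := by
  have h1 : mAbs (x * u) = uᴴ * mAbs x * u := by
    apply mAbs_eq ((mAbs_posSemidef x).conjTranspose_mul_mul_same u)
    have : uᴴ * mAbs x * u * (uᴴ * mAbs x * u) = uᴴ * (mAbs x * (u * uᴴ) * mAbs x) * u := by
      simp only [Matrix.mul_assoc]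
    rw [this, hu', Matrix.mul_one, mAbs_mul_self, conjTranspose_mul]
    simp only [Matrix.mul_assoc]
  rw [trNorm, h1, trNorm]
  congr 2
  rw [Matrix.mul_assoc, Matrix.trace_mul_comm, Matrix.mul_assoc, hu', Matrix.mul_one]

section padlemmas

variable {k n : ℕ} (h : k ≤ n)

def padEquiv : Fin n ≃ Fin k ⊕ Fin (n - k) :=
  (finCongr (Nat.add_sub_cancel' h).symm).trans finSumFinEquiv.symm

lemma padEquiv_lt {i : Fin n} (hi : (i:ℕ) < k) : padEquiv h i = Sum.inl ⟨i, hi⟩ := by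
  have : (finCongr (Nat.add_sub_cancel' h).symm i) = Fin.castAdd (n-k) ⟨i, hi⟩ := by
    ext; simp
  simp only [padEquiv, Equiv.trans_apply, this, finSumFinEquiv_symm_apply_castAdd]

lemma padEquiv_ge {i : Fin n} (hi : ¬ (i:ℕ) < k) :
    padEquiv h i = Sum.inr ⟨(i:ℕ) - k, by omega⟩ := by
  have : (finCongr (Nat.add_sub_cancel' h).symm i) =
      Fin.natAdd k ⟨(i:ℕ) - k, by omega⟩ := by
    ext; simp; omega
  simp only [padEquiv, Equiv.trans_apply, this, finSumFinEquiv_symm_apply_natAdd]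

lemma pad_eq (u : Matrix (Fin k) (Fin k) ℂ) :
    pad h u = (fromBlocks u 0 0 (1 : Matrix (Fin (n-k)) (Fin (n-k)) ℂ)).submatrix
      (padEquiv h) (padEquiv h) := by
  ext i j
  rcases lt_or_ge (i:ℕ) k with hi | hi <;> rcases lt_or_ge (j:ℕ) k with hj | hj
  · simp [pad, hi, hj, submatrix_apply, padEquiv_lt h hi, padEquiv_lt h hj]
  · simp [pad, hi, hj, Nat.not_lt.2 hj, submatrix_apply, padEquiv_lt h hi,
      padEquiv_ge h (Nat.not_lt.2 hj)]
  · simp [pad, Nat.not_lt.2 hi, hj, submatrix_apply, padEquiv_ge h (Nat.not_lt.2 hi),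
      padEquiv_lt h hj]
    omega
  · have hij : ((i:ℕ) = (j:ℕ)) ↔ ((i:ℕ) - k = (j:ℕ) - k) := by omega
    simp [pad, Nat.not_lt.2 hi, Nat.not_lt.2 hj, submatrix_apply,
      padEquiv_ge h (Nat.not_lt.2 hi), padEquiv_ge h (Nat.not_lt.2 hj), Matrix.one_apply,
      Fin.ext_iff, hij]

lemma pad_mul (a b : Matrix (Fin k) (Fin k) ℂ) :
    pad h (a * b) = pad h a * pad h b := by
  rw [pad_eq, pad_eq, pad_eq, submatrix_mul_equiv, fromBlocks_multiply]
  simp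

lemma pad_one : pad h (1 : Matrix (Fin k) (Fin k) ℂ) = 1 := by
  rw [pad_eq, fromBlocks_one]
  simp [submatrix_one_equiv]

lemma pad_conjTranspose (a : Matrix (Fin k) (Fin k) ℂ) :
    (pad h a)ᴴ = pad h aᴴ := by
  rw [pad_eq, pad_eq, conjTranspose_submatrix, fromBlocks_conjTranspose]
  simp

lemma pad_unitary {a : Matrix (Fin k) (Fin k) ℂ} (ha : a ∈ Matrix.unitaryGroup (Fin k) ℂ) :
    (pad h a)ᴴ * pad h a = 1 ∧ pad h a * (pad h a)ᴴ = 1 := by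
  have h1 := (Matrix.mem_unitaryGroup_iff'.mp ha)
  have h2 := (Matrix.mem_unitaryGroup_iff.mp ha)
  constructor
  · rw [pad_conjTranspose, ← pad_mul]
    rw [show aᴴ * a = 1 from h1, pad_one]
  · rw [pad_conjTranspose, ← pad_mul]
    rw [show a * aᴴ = 1 from h2, pad_one]

def outer2 {n : ℕ} (a b : Fin n → ℂ) : Matrix (Fin n) (Fin n) ℂ :=
  Matrix.of fun i j => a i * star (b j)

lemma outer2_mul {n : ℕ} (a b c d : Fin n → ℂ) :
    outer2 a b * outer2 c d = (star b ⬝ᵥ c) • outer2 a d := by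
  ext i j
  simp only [outer2, Matrix.mul_apply, Matrix.of_apply, Matrix.smul_apply, dotProduct,
    Finset.sum_mul, smul_eq_mul, Pi.star_apply]
  apply Finset.sum_congr rfl
  intros; ring

lemma outer2_conjTranspose {n : ℕ} (a b : Fin n → ℂ) : (outer2 a b)ᴴ = outer2 b a := by
  ext i j
  simp only [outer2, conjTranspose_apply, Matrix.of_apply, star_mul', star_star]
  ring

lemma trace_outer2 {n : ℕ} (a b : Fin n → ℂ) : (outer2 a b).trace = star b ⬝ᵥ a := by
  simp only [Matrix.trace, outer2, Matrix.diag, dotProduct, Matrix.of_apply, Pi.star_apply]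
  apply Finset.sum_congr rfl
  intros; ring

lemma outer2_mulVec {n : ℕ} (a b x : Fin n → ℂ) :
    outer2 a b *ᵥ x = (star b ⬝ᵥ x) • a := by
  ext i
  simp only [outer2, Matrix.mulVec, dotProduct, Matrix.of_apply, Pi.smul_apply, smul_eq_mul,
    Pi.star_apply, Finset.sum_mul]
  apply Finset.sum_congr rfl
  intros; ring

lemma cs_lemma {n : ℕ} (u₁ u₂ : Fin n → ℂ) (h₁ : star u₁ ⬝ᵥ u₁ = 1)
    (h₂ : star u₂ ⬝ᵥ u₂ = 1) :
    Complex.normSq (star u₁ ⬝ᵥ u₂) ≤ 1 ∧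
      (Complex.normSq (star u₁ ⬝ᵥ u₂) = 1 → u₂ = (star u₁ ⬝ᵥ u₂) • u₁) := by
  set c := star u₁ ⬝ᵥ u₂ with hc
  have key : star (u₂ - c • u₁) ⬝ᵥ (u₂ - c • u₁) = ((1 - Complex.normSq c : ℝ) : ℂ) := by
    have hsc : star u₂ ⬝ᵥ u₁ = star c := by
      rw [hc, star_dotProduct]
    push_cast
    rw [star_sub, star_smul, sub_dotProduct, dotProduct_sub, dotProduct_sub,
      smul_dotProduct, smul_dotProduct, dotProduct_smul, dotProduct_smul,
      h₁, h₂, hsc, ← hc]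
    rw [Complex.normSq_eq_conj_mul_self]
    simp only [smul_eq_mul, Complex.star_def]
    ring
  have nonneg := dotProduct_star_self_nonneg (u₂ - c • u₁)
  rw [key] at nonneg
  constructor
  · have := (Complex.zero_le_real).mp nonneg
    linarith
  · intro h1
    have : star (u₂ - c • u₁) ⬝ᵥ (u₂ - c • u₁) = 0 := by rw [key, h1]; norm_num
    have := dotProduct_star_self_eq_zero.mp this
    exact sub_eq_zero.mp this

lemma key_bound {n : ℕ} (u₁ u₂ : Fin n → ℂ) (h₁ : star u₁ ⬝ᵥ u₁ = 1)
    (h₂ : star u₂ ⬝ᵥ u₂ = 1) :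
    (mAbs ((2:ℂ) • (outer2 u₁ u₁ - outer2 u₂ u₂))).trace.re ≤ 4 := by
  set c := star u₁ ⬝ᵥ u₂ with hc
  have hsc : star u₂ ⬝ᵥ u₁ = star c := by rw [hc, star_dotProduct]
  set H := outer2 u₁ u₁ - outer2 u₂ u₂ with hH
  have hherm : Hᴴ = H := by
    rw [hH, conjTranspose_sub, outer2_conjTranspose, outer2_conjTranspose]
  have hH2 : H * H = outer2 u₁ u₁ + outer2 u₂ u₂ - c • outer2 u₁ u₂
      - (star c) • outer2 u₂ u₁ := by
    rw [hH]
    simp only [Matrix.sub_mul, Matrix.mul_sub, outer2_mul, h₁, h₂, hsc, ← hc, one_smul]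
    module
  have hcast : ((1 - Complex.normSq c : ℝ) : ℂ) = 1 - c * star c := by
    push_cast
    rw [Complex.star_def, Complex.mul_conj]
  have hH4 : (H * H) * (H * H) = ((1 - Complex.normSq c : ℝ) : ℂ) • (H * H) := by
    rw [hH2, hcast]
    simp only [Matrix.sub_mul, Matrix.mul_sub, Matrix.add_mul, Matrix.mul_add,
      smul_mul_assoc, mul_smul_comm, outer2_mul, h₁, h₂, hsc, ← hc, smul_smul, one_smul]
    match_scalars <;> ring
  by_cases hn : Complex.normSq c = 1
  · have h40 : (H * H) * (H * H) = 0 := by rw [hH4, hn]; norm_num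
    have hH2herm : (H * H)ᴴ = H * H := by rw [conjTranspose_mul, hherm]
    have hH20 : H * H = 0 := by
      have : (H * H)ᴴ * (H * H) = 0 := by rw [hH2herm, h40]
      exact Matrix.conjTranspose_mul_self_eq_zero.mp this
    have hH0 : H = 0 := by
      have : Hᴴ * H = 0 := by rw [hherm, hH20]
      exact Matrix.conjTranspose_mul_self_eq_zero.mp this
    rw [hH0, smul_zero]
    have : mAbs (0 : Matrix (Fin n) (Fin n) ℂ) = 0 := by
      apply mAbs_eq Matrix.PosSemidef.zero; simp
    rw [this]; simp
  · have hle := (cs_lemma u₁ u₂ h₁ h₂).1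
    rw [← hc] at hle
    have hge : 0 ≤ Complex.normSq c := Complex.normSq_nonneg c
    have hlt : Complex.normSq c < 1 := lt_of_le_of_ne hle hn
    set σ := Complex.normSq c with hσ
    set t := Real.sqrt (1 - σ) with htdef
    have ht2 : t * t = 1 - σ := Real.mul_self_sqrt (by linarith)
    have ht0 : 0 < t := Real.sqrt_pos.mpr (by linarith)
    have ht1 : t ≤ 1 := by
      have : t ≤ Real.sqrt 1 := Real.sqrt_le_sqrt (by linarith)
      simpa using this
    set M := ((2 / t : ℝ) : ℂ) • (H * H) with hM
    have hpsd : M.PosSemidef := by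
      have key : ((Real.sqrt (2/t) : ℂ) • H)ᴴ * ((Real.sqrt (2/t) : ℂ) • H) = M := by
        rw [conjTranspose_smul, hherm, smul_mul_assoc, mul_smul_comm, smul_smul]
        rw [Complex.star_def, Complex.conj_ofReal, ← Complex.ofReal_mul,
          Real.mul_self_sqrt (by positivity)]
      rw [← key]
      exact Matrix.posSemidef_conjTranspose_mul_self _
    have hsq : M * M = ((2:ℂ) • H)ᴴ * ((2:ℂ) • H) := by
      rw [hM, smul_mul_assoc, mul_smul_comm, smul_smul, hH4, smul_smul]
      rw [conjTranspose_smul, hherm, smul_mul_assoc, mul_smul_comm, smul_smul]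
      congr 1
      rw [← Complex.ofReal_mul, ← Complex.ofReal_mul]
      have : 2 / t * (2 / t) * (1 - σ) = 4 := by
        rw [← ht2]; field_simp; ring
      rw [this]
      norm_num [Complex.star_def]
    have habs : mAbs ((2:ℂ) • H) = M := mAbs_eq hpsd hsq
    rw [habs, hM]
    have htr : (H * H).trace = ((2 - 2*σ : ℝ) : ℂ) := by
      rw [hH2, trace_sub, trace_sub, trace_add, trace_smul, trace_smul,
        trace_outer2, trace_outer2, trace_outer2, trace_outer2, h₁, h₂, hsc, ← hc]
      push_cast
      rw [hσ, Complex.normSq_eq_conj_mul_self]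
      simp only [smul_eq_mul, Complex.star_def]
      ring
    rw [trace_smul, htr, smul_eq_mul, ← Complex.ofReal_mul, Complex.ofReal_re]
    have : 2 / t * (2 - 2*σ) = 4 * t := by
      rw [show (2:ℝ) - 2*σ = 2*(t*t) by rw [ht2]; ring]
      field_simp; ring
    rw [this]
    nlinarith

noncomputable def hh {n : ℕ} (u : Fin n → ℂ) : Matrix (Fin n) (Fin n) ℂ :=
  1 - (2:ℂ) • outer2 u u

lemma hh_mulVec {n : ℕ} (u v : Fin n → ℂ) :
    hh u *ᵥ v = v - ((2:ℂ) * (star u ⬝ᵥ v)) • u := by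
  rw [hh, sub_mulVec, one_mulVec, smul_mulVec, outer2_mulVec, smul_smul]

lemma hh_maps {n : ℕ} {v t : Fin n → ℂ} {τ : ℝ} (hv : star v ⬝ᵥ v = 1)
    (ht : star t ⬝ᵥ t = 1) (hτ : star t ⬝ᵥ v = (τ:ℂ)) (hτ1 : τ < 1) :
    ∃ u : Fin n → ℂ, star u ⬝ᵥ u = 1 ∧ (∀ j, v j = 0 → t j = 0 → u j = 0) ∧
      hh u *ᵥ v = t ∧ hh u *ᵥ t = v := by
  have hvt : star v ⬝ᵥ t = (τ:ℂ) := by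
    rw [star_dotProduct, hτ, Complex.star_def, Complex.conj_ofReal]
  set ρ : ℝ := Real.sqrt (2 - 2*τ) with hρ
  have hρ2 : ρ * ρ = 2 - 2*τ := Real.mul_self_sqrt (by linarith)
  have hρ0 : 0 < ρ := Real.sqrt_pos.mpr (by linarith)
  refine ⟨((ρ⁻¹ : ℝ) : ℂ) • (v - t), ?_, ?_, ?_, ?_⟩
  · rw [star_smul, smul_dotProduct, dotProduct_smul]
    rw [star_sub, sub_dotProduct, dotProduct_sub, dotProduct_sub, hv, ht, hτ, hvt]
    rw [Complex.star_def, Complex.conj_ofReal, smul_eq_mul, smul_eq_mul]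
    rw [show (1:ℂ) - ↑τ - (↑τ - 1) = ((2 - 2*τ : ℝ) : ℂ) by push_cast; ring]
    rw [← Complex.ofReal_mul, ← Complex.ofReal_mul, ← Complex.ofReal_one]
    congr 1
    field_simp
    nlinarith
  · intro j hvj htj
    simp [hvj, htj]
  · rw [hh_mulVec]
    rw [star_smul, smul_dotProduct, star_sub, sub_dotProduct, hv, hτ]
    rw [Complex.star_def, Complex.conj_ofReal, smul_eq_mul, smul_smul]
    have hc : (2:ℂ) * (↑ρ⁻¹ * (1 - ↑τ)) * ↑ρ⁻¹ = 1 := by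
      rw [show (2:ℂ) * (↑ρ⁻¹ * (1 - ↑τ)) * ↑ρ⁻¹ = ↑(ρ⁻¹ * ρ⁻¹ * (2 - 2*τ)) by push_cast; ring]
      rw [show ρ⁻¹ * ρ⁻¹ * (2 - 2*τ) = 1 by field_simp [← hρ2]; nlinarith [hρ2]]
      simp
    rw [hc, one_smul]
    abel
  · rw [hh_mulVec]
    rw [star_smul, smul_dotProduct, star_sub, sub_dotProduct, ht, hvt]
    rw [Complex.star_def, Complex.conj_ofReal, smul_eq_mul, smul_smul]
    have hc : (2:ℂ) * (↑ρ⁻¹ * (↑τ - 1)) * ↑ρ⁻¹ = -1 := by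
      rw [show (2:ℂ) * (↑ρ⁻¹ * (↑τ - 1)) * ↑ρ⁻¹ = -↑(ρ⁻¹ * ρ⁻¹ * (2 - 2*τ)) by push_cast; ring]
      rw [show ρ⁻¹ * ρ⁻¹ * (2 - 2*τ) = 1 by field_simp [← hρ2]; nlinarith [hρ2]]
      simp
    rw [hc]
    module

lemma outer2_zero {n : ℕ} : outer2 (0 : Fin n → ℂ) 0 = 0 := by
  ext i j; simp [outer2]

lemma hh_zero {n : ℕ} : hh (0 : Fin n → ℂ) = 1 := by
  rw [hh, outer2_zero, smul_zero, sub_zero]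

lemma star_single_one {n : ℕ} (i : Fin n) :
    star (Pi.single i (1:ℂ) : Fin n → ℂ) = Pi.single i 1 := by
  funext j
  rcases eq_or_ne j i with rfl | hji
  · simp
  · simp [Pi.single_eq_of_ne hji]

lemma exists_two_refl {n k : ℕ} (hk2 : 2 ≤ k) (hkn : k ≤ n) (v₁ v₂ : Fin n → ℂ)
    (h₁ : star v₁ ⬝ᵥ v₁ = 1) (h₂ : star v₂ ⬝ᵥ v₂ = 1)
    (hs₁ : ∀ j : Fin n, k ≤ (j:ℕ) → v₁ j = 0) (hs₂ : ∀ j : Fin n, k ≤ (j:ℕ) → v₂ j = 0) :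
    ∃ u₁ u₂ : Fin n → ℂ, (star u₁ ⬝ᵥ u₁ = 1 ∨ u₁ = 0) ∧ (star u₂ ⬝ᵥ u₂ = 1 ∨ u₂ = 0) ∧
      (∀ j : Fin n, k ≤ (j:ℕ) → u₁ j = 0) ∧ (∀ j : Fin n, k ≤ (j:ℕ) → u₂ j = 0) ∧
      hh u₂ *ᵥ (hh u₁ *ᵥ v₁) = v₂ := by
  by_cases hvv : v₁ = v₂
  · exact ⟨0, 0, Or.inr rfl, Or.inr rfl, fun j _ => rfl, fun j _ => rfl, by
      rw [hh_zero, one_mulVec, one_mulVec, hvv]⟩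
  set s := star v₁ ⬝ᵥ v₂ with hs
  have hs21 : star v₂ ⬝ᵥ v₁ = star s := by rw [hs, star_dotProduct]
  -- we will produce a common target t
  have main : ∃ t : Fin n → ℂ, ∃ τ₁ τ₂ : ℝ, star t ⬝ᵥ t = 1 ∧
      (∀ j : Fin n, k ≤ (j:ℕ) → t j = 0) ∧
      star t ⬝ᵥ v₁ = (τ₁:ℂ) ∧ τ₁ < 1 ∧ star t ⬝ᵥ v₂ = (τ₂:ℂ) ∧ τ₂ < 1 := by
    by_cases hσ : Complex.normSq s = 1
    · -- degenerate case : v₂ = s • v₁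
      have hdep : v₂ = s • v₁ := (cs_lemma v₁ v₂ h₁ h₂).2 (by rw [← hs]; exact hσ)
      have hv1ne : v₁ ≠ 0 := by
        intro h0
        rw [h0] at h₁; simp at h₁
      obtain ⟨i₀, hi₀⟩ := Function.ne_iff.mp hv1ne
      have hi₀k : (i₀ : ℕ) < k := by
        by_contra hcon
        exact hi₀ (hs₁ i₀ (by omega))
      have hn2 : 2 ≤ n := le_trans hk2 hkn
      set i1 : Fin n := if (i₀ : ℕ) = 0 then ⟨1, by omega⟩ else ⟨0, by omega⟩ with hi1
      have hi1v : (i1 : ℕ) = 1 ∨ (i1 : ℕ) = 0 := by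
        rw [hi1]; split
        · left; rfl
        · right; rfl
      have hi1k : (i1 : ℕ) < k := by omega
      have hne : i1 ≠ i₀ := by
        have : (i1 : ℕ) ≠ (i₀ : ℕ) := by
          rw [hi1]; split
          · rename_i hcase; simp only []; omega
          · rename_i hcase; simp only []; omega
        exact fun h => this (by rw [h])
      set t' : Fin n → ℂ :=
        star (v₁ i1) • (Pi.single i₀ (1:ℂ) : Fin n → ℂ)
          - star (v₁ i₀) • (Pi.single i1 (1:ℂ) : Fin n → ℂ) with ht'
      have hstart' : star t' = v₁ i1 • (Pi.single i₀ (1:ℂ) : Fin n → ℂ)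
          - v₁ i₀ • (Pi.single i1 (1:ℂ) : Fin n → ℂ) := by
        rw [ht', star_sub, star_smul, star_smul, star_single_one, star_single_one, star_star,
          star_star]
      have ht'v : star t' ⬝ᵥ v₁ = 0 := by
        rw [hstart', sub_dotProduct, smul_dotProduct, smul_dotProduct,
          single_dotProduct, single_dotProduct]
        simp only [smul_eq_mul, one_mul]
        ring
      have ht'i₀ : t' i₀ = star (v₁ i1) := by
        simp [ht', Pi.single_eq_of_ne hne, Pi.single_eq_of_ne (Ne.symm hne)]
      have ht'i1 : t' i1 = -star (v₁ i₀) := by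
        simp [ht', Pi.single_eq_of_ne hne, Pi.single_eq_of_ne (Ne.symm hne)]
      have ht't : star t' ⬝ᵥ t' =
          ((Complex.normSq (v₁ i₀) + Complex.normSq (v₁ i1) : ℝ) : ℂ) := by
        rw [hstart', sub_dotProduct, smul_dotProduct, smul_dotProduct,
          single_dotProduct, single_dotProduct]
        simp only [smul_eq_mul, one_mul, ht'i₀, ht'i1]
        push_cast
        rw [← Complex.mul_conj, ← Complex.mul_conj]
        simp only [Complex.star_def]
        ring
      set ρ : ℝ := Real.sqrt (Complex.normSq (v₁ i₀) + Complex.normSq (v₁ i1)) with hρ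
      have hρpos : 0 < ρ := Real.sqrt_pos.mpr (by
        have h0 : 0 < Complex.normSq (v₁ i₀) := Complex.normSq_pos.mpr hi₀
        have h1 : 0 ≤ Complex.normSq (v₁ i1) := Complex.normSq_nonneg _
        linarith)
      have hρ2 : ρ * ρ = Complex.normSq (v₁ i₀) + Complex.normSq (v₁ i1) :=
        Real.mul_self_sqrt
          (by nlinarith [Complex.normSq_nonneg (v₁ i₀), Complex.normSq_nonneg (v₁ i1)])
      refine ⟨((ρ⁻¹:ℝ):ℂ) • t', 0, 0, ?_, ?_, ?_, by norm_num, ?_, by norm_num⟩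
      · rw [star_smul, smul_dotProduct, dotProduct_smul, ht't, Complex.star_def,
          Complex.conj_ofReal, smul_eq_mul, smul_eq_mul]
        rw [← Complex.ofReal_mul, ← Complex.ofReal_mul, ← Complex.ofReal_one]
        congr 1
        rw [← hρ2]
        field_simp
      · intro j hj
        have hji₀ : j ≠ i₀ := by intro h; rw [h] at hj; omega
        have hji1 : j ≠ i1 := by intro h; rw [h] at hj; omega
        simp [ht', Pi.single_eq_of_ne hji₀, Pi.single_eq_of_ne hji1]
      · rw [star_smul, smul_dotProduct, ht'v, smul_zero]
        norm_num
      · rw [star_smul, smul_dotProduct, hdep, dotProduct_smul, ht'v]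
        simp
    · -- nondegenerate case
      have hle := (cs_lemma v₁ v₂ h₁ h₂).1
      rw [← hs] at hle
      set σ : ℝ := Complex.normSq s with hσdef
      have hσlt : σ < 1 := lt_of_le_of_ne hle hσ
      have hσ0 : 0 ≤ σ := Complex.normSq_nonneg s
      have habs : ‖s‖ < 1 := by
        nlinarith [Complex.sq_norm s, norm_nonneg s]
      have hre : s.re < 1 := lt_of_le_of_lt (Complex.re_le_norm s) habs
      have hs1 : s ≠ 1 := by
        intro h
        apply hσ
        rw [hσdef, h]; simp
      set t' : Fin n → ℂ := (1 - s) • v₁ + (1 - star s) • v₂ with ht'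
      have hcast1 : ((1 - σ : ℝ) : ℂ) = 1 - s * star s := by
        push_cast
        rw [Complex.star_def, Complex.mul_conj]
      have ht'v1 : star t' ⬝ᵥ v₁ = ((1 - σ : ℝ) : ℂ) := by
        rw [ht', star_add, star_smul, star_smul, add_dotProduct, smul_dotProduct,
          smul_dotProduct, h₁, hs21, hcast1]
        simp only [smul_eq_mul, mul_one, star_sub, star_one, star_star]
        ring
      have ht'v2 : star t' ⬝ᵥ v₂ = ((1 - σ : ℝ) : ℂ) := by
        rw [ht', star_add, star_smul, star_smul, add_dotProduct, smul_dotProduct,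
          smul_dotProduct, h₂, ← hs, hcast1]
        simp only [smul_eq_mul, mul_one, star_sub, star_one, star_star]
        ring
      have hv1t : star v₁ ⬝ᵥ t' = ((1 - σ : ℝ) : ℂ) := by
        rw [star_dotProduct, ht'v1, Complex.star_def, Complex.conj_ofReal]
      have hv2t : star v₂ ⬝ᵥ t' = ((1 - σ : ℝ) : ℂ) := by
        rw [star_dotProduct, ht'v2, Complex.star_def, Complex.conj_ofReal]
      have hsum : (1 - s) + (1 - star s) = ((2 - 2*s.re : ℝ):ℂ) := by
        have hrhs : ((2 - 2*s.re : ℝ):ℂ) = 2 - (s + (starRingEnd ℂ) s) := by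
          rw [Complex.add_conj]; push_cast; ring
        rw [Complex.star_def, hrhs]; ring
      have ht't : star t' ⬝ᵥ t' = (((1 - σ) * (2 - 2*s.re) : ℝ) : ℂ) := by
        nth_rewrite 2 [ht']
        rw [dotProduct_add, dotProduct_smul, dotProduct_smul, ht'v1, ht'v2,
          smul_eq_mul, smul_eq_mul, ← add_mul, hsum, ← Complex.ofReal_mul]
        congr 1
        ring
      have hre2 : (1 - σ) < 2 - 2*s.re := by
        have hs' : s.re ≠ 1 ∨ s.im ≠ 0 := by
          by_contra hcon
          push_neg at hcon
          exact hs1 (Complex.ext hcon.1 (by simp [hcon.2]))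
        have hnsq : σ = s.re*s.re + s.im*s.im := by
          rw [hσdef, Complex.normSq_apply]
        rcases hs' with h | h <;> nlinarith [sq_nonneg (s.re - 1), sq_nonneg s.im]
      set ρ : ℝ := Real.sqrt ((1 - σ) * (2 - 2*s.re)) with hρ
      have hρpos : 0 < ρ := Real.sqrt_pos.mpr (by nlinarith)
      have hρ2 : ρ * ρ = (1 - σ) * (2 - 2*s.re) := Real.mul_self_sqrt (by nlinarith)
      have hρgt : 1 - σ < ρ := by nlinarith
      have hτlt : ρ⁻¹ * (1 - σ) < 1 := by
        rw [inv_mul_eq_div, div_lt_one hρpos]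
        exact hρgt
      refine ⟨((ρ⁻¹:ℝ):ℂ) • t', ρ⁻¹ * (1 - σ), ρ⁻¹ * (1 - σ), ?_, ?_, ?_, hτlt, ?_, hτlt⟩
      · rw [star_smul, smul_dotProduct, dotProduct_smul, ht't, Complex.star_def,
          Complex.conj_ofReal, smul_eq_mul, smul_eq_mul]
        rw [← Complex.ofReal_mul, ← Complex.ofReal_mul, ← Complex.ofReal_one]
        congr 1
        rw [← hρ2]
        field_simp
      · intro j hj
        have e1 : v₁ j = 0 := hs₁ j hj
        have e2 : v₂ j = 0 := hs₂ j hj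
        simp [ht', e1, e2]
      · rw [star_smul, smul_dotProduct, ht'v1, Complex.star_def, Complex.conj_ofReal,
          smul_eq_mul, ← Complex.ofReal_mul]
      · rw [star_smul, smul_dotProduct, ht'v2, Complex.star_def, Complex.conj_ofReal,
          smul_eq_mul, ← Complex.ofReal_mul]
  obtain ⟨t, τ₁, τ₂, htt, htsup, hτ1, hτ1lt, hτ2, hτ2lt⟩ := main
  obtain ⟨u₁, hu₁u, hu₁sup, hu₁v, _⟩ := hh_maps h₁ htt hτ1 hτ1lt
  obtain ⟨u₂, hu₂u, hu₂sup, _, hu₂t⟩ := hh_maps h₂ htt hτ2 hτ2lt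
  exact ⟨u₁, u₂, Or.inl hu₁u, Or.inl hu₂u,
    fun j hj => hu₁sup j (hs₁ j hj) (htsup j hj),
    fun j hj => hu₂sup j (hs₂ j hj) (htsup j hj),
    by rw [hu₁v, hu₂t]⟩

lemma block_extract {n k1 : ℕ} (hk1n : k1 ≤ n) (c : Matrix (Fin n) (Fin n) ℂ)
    (hc : cᴴ * c = 1)
    (hcols : ∀ j : Fin n, k1 ≤ (j:ℕ) → ∀ i : Fin n, c i j = if i = j then 1 else 0) :
    ∃ h ∈ Matrix.unitaryGroup (Fin k1) ℂ, pad hk1n h = c := by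
  have hrow : ∀ i j : Fin n, k1 ≤ (i:ℕ) → (j:ℕ) < k1 → c i j = 0 := by
    intro i j hi hj
    have h0 : (cᴴ * c) i j = 0 := by
      rw [hc, Matrix.one_apply]
      simp only [ite_eq_right_iff]
      intro h
      exfalso
      rw [h] at hi
      omega
    rw [Matrix.mul_apply] at h0
    have hterm : ∀ l : Fin n, cᴴ i l * c l j = if l = i then c i j else 0 := by
      intro l
      rw [Matrix.conjTranspose_apply, hcols i hi l]
      split <;> simp_all
    rw [Finset.sum_congr rfl (fun l _ => hterm l)] at h0
    simpa using h0
  set h : Matrix (Fin k1) (Fin k1) ℂ := Matrix.of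
    (fun a b : Fin k1 => c ⟨a, lt_of_lt_of_le a.2 hk1n⟩ ⟨b, lt_of_lt_of_le b.2 hk1n⟩) with hdef
  have hsum : ∀ a b : Fin k1, (hᴴ * h) a b =
      (cᴴ * c) ⟨a, lt_of_lt_of_le a.2 hk1n⟩ ⟨b, lt_of_lt_of_le b.2 hk1n⟩ := by
    intro a b
    rw [Matrix.mul_apply, Matrix.mul_apply]
    set a' : Fin n := ⟨a, lt_of_lt_of_le a.2 hk1n⟩
    set b' : Fin n := ⟨b, lt_of_lt_of_le b.2 hk1n⟩
    set F : ℕ → ℂ := fun l => if hl : l < n then star (c ⟨l, hl⟩ a') * c ⟨l, hl⟩ b' else 0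
      with hF
    have e1 : ∑ l : Fin n, cᴴ a' l * c l b' = ∑ l ∈ Finset.range n, F l := by
      rw [← Fin.sum_univ_eq_sum_range]
      apply Finset.sum_congr rfl
      intro l _
      simp [hF, Matrix.conjTranspose_apply, l.2]
    have e2 : ∑ l ∈ Finset.range n, F l = ∑ l ∈ Finset.range k1, F l := by
      symm
      apply Finset.sum_subset (Finset.range_subset_range.mpr hk1n)
      intro l hln hlk
      simp only [Finset.mem_range] at hln hlk
      rw [hF]
      simp only [hln, dif_pos]
      rw [hrow ⟨l, hln⟩ a' (by simp; omega) (by exact a.2)]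
      simp
    have e3 : ∑ l ∈ Finset.range k1, F l = ∑ l : Fin k1, hᴴ a l * h l b := by
      rw [← Fin.sum_univ_eq_sum_range]
      apply Finset.sum_congr rfl
      intro l _
      have hln : (l:ℕ) < n := lt_of_lt_of_le l.2 hk1n
      simp [hF, Matrix.conjTranspose_apply, hln, hdef]
      rfl
    rw [e1, e2, e3]
  have huni : h ∈ Matrix.unitaryGroup (Fin k1) ℂ := by
    rw [Matrix.mem_unitaryGroup_iff']
    ext a b
    rw [show (star h : Matrix (Fin k1) (Fin k1) ℂ) = hᴴ from rfl, hsum a b, hc]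
    simp [Matrix.one_apply, Fin.ext_iff]
  refine ⟨h, huni, ?_⟩
  ext i j
  rcases lt_or_ge (i:ℕ) k1 with hi | hi <;> rcases lt_or_ge (j:ℕ) k1 with hj | hj
  · simp only [pad, dif_pos hi, dif_pos hj]; rfl
  · have hcij : c i j = 0 := by
      rw [hcols j hj i]
      exact if_neg (fun hh => by rw [hh] at hi; omega)
    rw [hcij]
    simp [pad, hi, Nat.not_lt.mpr hj]
  · have hcij : c i j = 0 := hrow i j hi hj
    rw [hcij]
    simp only [pad, dif_neg (Nat.not_lt.mpr hi), ite_eq_right_iff]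
    intro hij
    omega
  · rw [hcols j hj i]
    simp only [pad, dif_neg (Nat.not_lt.mpr hi)]
    simp [Fin.ext_iff]


lemma hh_conjTranspose {n : ℕ} (u : Fin n → ℂ) : (hh u)ᴴ = hh u := by
  rw [hh, conjTranspose_sub, conjTranspose_one, conjTranspose_smul, outer2_conjTranspose]
  norm_num

lemma hh_mul_self {n : ℕ} {u : Fin n → ℂ} (hu : star u ⬝ᵥ u = 1 ∨ u = 0) :
    hh u * hh u = 1 := by
  rcases hu with hu | hu
  · rw [hh]
    simp only [Matrix.mul_sub, Matrix.sub_mul, Matrix.mul_one, Matrix.one_mul,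
      smul_mul_assoc, mul_smul_comm, outer2_mul, hu, smul_smul, one_smul]
    module
  · rw [hu, hh_zero, Matrix.one_mul]

lemma uniMul {n : ℕ} {a b : Matrix (Fin n) (Fin n) ℂ} (ha : aᴴ * a = 1) (hb : bᴴ * b = 1) :
    (a * b)ᴴ * (a * b) = 1 := by
  rw [conjTranspose_mul, Matrix.mul_assoc, ← Matrix.mul_assoc aᴴ, ha, Matrix.one_mul, hb]

lemma mAbs_two_outer {n : ℕ} {u : Fin n → ℂ} (hu : star u ⬝ᵥ u = 1) (ε : ℂ)
    (hε : star ε * ε = 4) :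
    mAbs (ε • outer2 u u) = (2:ℂ) • outer2 u u := by
  have hBB : outer2 u u * outer2 u u = outer2 u u := by rw [outer2_mul, hu, one_smul]
  have hBH : (outer2 u u)ᴴ = outer2 u u := outer2_conjTranspose u u
  apply mAbs_eq
  · have key : (((Real.sqrt 2 : ℝ) : ℂ) • outer2 u u)ᴴ * (((Real.sqrt 2 : ℝ) : ℂ) • outer2 u u)
        = (2:ℂ) • outer2 u u := by
      rw [conjTranspose_smul, hBH, smul_mul_assoc, mul_smul_comm, smul_smul, hBB]
      rw [Complex.star_def, Complex.conj_ofReal, ← Complex.ofReal_mul,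
        Real.mul_self_sqrt (by norm_num)]
      norm_num
    rw [← key]
    exact Matrix.posSemidef_conjTranspose_mul_self _
  · rw [conjTranspose_smul, hBH, smul_mul_assoc, mul_smul_comm, smul_smul, hBB,
      smul_mul_assoc, mul_smul_comm, smul_smul, hBB, hε]
    norm_num

lemma key_bound' {n : ℕ} {u₁ u₂ : Fin n → ℂ} (h₁ : star u₁ ⬝ᵥ u₁ = 1 ∨ u₁ = 0)
    (h₂ : star u₂ ⬝ᵥ u₂ = 1 ∨ u₂ = 0) :
    (mAbs ((2:ℂ) • (outer2 u₁ u₁ - outer2 u₂ u₂))).trace.re ≤ 4 := by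
  rcases h₁ with h₁ | h₁ <;> rcases h₂ with h₂ | h₂
  · exact key_bound u₁ u₂ h₁ h₂
  · rw [h₂, outer2_zero, sub_zero, mAbs_two_outer h₁ 2 (by norm_num), trace_smul,
      trace_outer2, h₁]
    norm_num
  · rw [h₁, outer2_zero, zero_sub, smul_neg,
      show -((2:ℂ) • outer2 u₂ u₂) = (-2 : ℂ) • outer2 u₂ u₂ by module,
      mAbs_two_outer h₂ (-2) (by norm_num), trace_smul, trace_outer2, h₂]
    norm_num
  · rw [h₁, h₂, outer2_zero, sub_zero, smul_zero]
    rw [show mAbs (0 : Matrix (Fin n) (Fin n) ℂ) = 0 from mAbs_eq .zero (by simp)]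
    simp

lemma pad_from_zero {n : ℕ} (p : 0 ≤ n) (u : Matrix (Fin 0) (Fin 0) ℂ) : pad p u = 1 := by
  ext i j
  simp [pad, Matrix.one_apply, Fin.ext_iff]

lemma mAbs_diagonal {n : ℕ} (d : Fin n → ℂ) :
    mAbs (Matrix.diagonal d) = Matrix.diagonal (fun i => ((‖d i‖ : ℝ) : ℂ)) := by
  apply mAbs_eq
  · exact Matrix.PosSemidef.diagonal (fun i => Complex.zero_le_real.mpr (norm_nonneg _))
  · rw [Matrix.diagonal_mul_diagonal, Matrix.diagonal_conjTranspose, Matrix.diagonal_mul_diagonal]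
    have : (fun i => ((‖d i‖ : ℝ):ℂ) * ((‖d i‖ : ℝ):ℂ))
        = fun i => star (d i) * d i := by
      funext i
      calc ((‖d i‖ : ℝ):ℂ) * ((‖d i‖ : ℝ):ℂ)
          = ((‖d i‖ ^ 2 : ℝ) : ℂ) := by push_cast; ring
        _ = ((Complex.normSq (d i) : ℝ) : ℂ) := by rw [Complex.sq_norm]
        _ = star (d i) * d i := by
            rw [← Complex.mul_conj, Complex.star_def]; ring
    rw [this]
    rfl

/-- the diameter of `U(k)/U(k-1)` inside `U(n)` (normalized trace metric,
block-diagonal embeddings) is at most `4/n`. -/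
theorem diam_quotient_le (n k : ℕ) (hk : 1 ≤ k) (hkn : k ≤ n) :
    (⨆ g₁ : Matrix.unitaryGroup (Fin k) ℂ, ⨆ g₂ : Matrix.unitaryGroup (Fin k) ℂ,
      ⨅ h₁ : Matrix.unitaryGroup (Fin (k - 1)) ℂ, ⨅ h₂ : Matrix.unitaryGroup (Fin (k - 1)) ℂ,
        trNorm (pad hkn (g₁ : Matrix (Fin k) (Fin k) ℂ)
              * pad (le_trans (Nat.sub_le k 1) hkn) (h₁ : Matrix (Fin (k-1)) (Fin (k-1)) ℂ)
            - pad hkn (g₂ : Matrix (Fin k) (Fin k) ℂ)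
              * pad (le_trans (Nat.sub_le k 1) hkn) (h₂ : Matrix (Fin (k-1)) (Fin (k-1)) ℂ)))
      ≤ 4 / n := by
  haveI : Nonempty ↥(Matrix.unitaryGroup (Fin k) ℂ) := ⟨1⟩
  haveI : Nonempty ↥(Matrix.unitaryGroup (Fin (k-1)) ℂ) := ⟨1⟩
  have hn0 : 0 < n := lt_of_lt_of_le hk hkn
  apply ciSup_le; intro g₁
  apply ciSup_le; intro g₂
  have main : ∃ H1 H2 : Matrix.unitaryGroup (Fin (k-1)) ℂ,
      trNorm (pad hkn (g₁ : Matrix (Fin k) (Fin k) ℂ)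
            * pad (le_trans (Nat.sub_le k 1) hkn) (H1 : Matrix (Fin (k-1)) (Fin (k-1)) ℂ)
          - pad hkn (g₂ : Matrix (Fin k) (Fin k) ℂ)
            * pad (le_trans (Nat.sub_le k 1) hkn) (H2 : Matrix (Fin (k-1)) (Fin (k-1)) ℂ))
        ≤ 4 / n := by
    rcases (by omega : k = 1 ∨ 2 ≤ k) with hk1 | hk2
    · -- k = 1
      subst hk1
      refine ⟨1, 1, ?_⟩
      rw [pad_from_zero, Matrix.mul_one, Matrix.mul_one]
      set z₁ := (g₁ : Matrix (Fin 1) (Fin 1) ℂ) 0 0 with hz₁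
      set z₂ := (g₂ : Matrix (Fin 1) (Fin 1) ℂ) 0 0 with hz₂
      set j₀ : Fin n := ⟨0, hn0⟩ with hj₀
      have hD : pad hkn (g₁ : Matrix (Fin 1) (Fin 1) ℂ) - pad hkn (g₂ : Matrix (Fin 1) (Fin 1) ℂ)
          = Matrix.diagonal (fun j => if j = j₀ then z₁ - z₂ else 0) := by
        ext i j
        rcases Nat.lt_or_ge (i:ℕ) 1 with hi | hi <;> rcases Nat.lt_or_ge (j:ℕ) 1 with hj | hj
        · have hi0 : i = j₀ := by
            apply Fin.ext
            show (i:ℕ) = 0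
            omega
          have hj0 : j = j₀ := by
            apply Fin.ext
            show (j:ℕ) = 0
            omega
          subst hi0; subst hj0
          have e1 : (⟨(j₀:ℕ), hi⟩ : Fin 1) = 0 := by ext; simp [hj₀]
          simp [pad, Matrix.diagonal_apply, hi, e1, hz₁, hz₂]
        · have hne : i ≠ j := by intro h; rw [h] at hi; omega
          simp [pad, Matrix.diagonal_apply, hi, Nat.not_lt.mpr hj, hne]
        · have hne : i ≠ j := by intro h; rw [h] at hi; omega
          have hne' : (i:ℕ) ≠ (j:ℕ) := by omega
          simp [pad, Matrix.diagonal_apply, Nat.not_lt.mpr hi, hj, hne, hne']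
        · have hii : ¬ ((i:ℕ) < 1) := Nat.not_lt.mpr hi
          have hjj : ¬ ((j:ℕ) < 1) := Nat.not_lt.mpr hj
          have hij0 : i ≠ j₀ := by
            intro h
            have : (i:ℕ) = 0 := by rw [h]
            omega
          simp only [Matrix.sub_apply, pad, hii, hjj, dite_false, dif_neg,
            Matrix.diagonal_apply, hij0]
          rcases eq_or_ne i j with rfl | hne
          · simp [hij0]
          · have : (i:ℕ) ≠ (j:ℕ) := fun h => hne (Fin.ext h)
            simp [this, hne]
      rw [hD, trNorm, mAbs_diagonal, Matrix.trace_diagonal]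
      have hsum : (∑ i : Fin n, ((‖if i = j₀ then z₁ - z₂ else 0‖ : ℝ) : ℂ))
          = ((‖z₁ - z₂‖ : ℝ) : ℂ) := by
        rw [Finset.sum_eq_single j₀]
        · simp
        · intro b _ hb; simp [hb]
        · intro h; exact absurd (Finset.mem_univ j₀) h
      rw [hsum, Complex.ofReal_re]
      have habs1 : ‖z₁‖ = 1 := by
        have h := Matrix.mem_unitaryGroup_iff'.mp g₁.2
        have h00 := congrFun (congrFun h 0) 0
        rw [Matrix.mul_apply] at h00
        simp only [Fin.sum_univ_one, Matrix.one_apply_eq] at h00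
        have h00' : (starRingEnd ℂ) z₁ * z₁ = 1 := h00
        have hns : Complex.normSq z₁ = 1 := by
          have : ((Complex.normSq z₁ : ℝ) : ℂ) = 1 := by
            rw [Complex.normSq_eq_conj_mul_self, h00']
          exact_mod_cast this
        rw [Complex.norm_def, hns, Real.sqrt_one]
      have habs2 : ‖z₂‖ = 1 := by
        have h := Matrix.mem_unitaryGroup_iff'.mp g₂.2
        have h00 := congrFun (congrFun h 0) 0
        rw [Matrix.mul_apply] at h00
        simp only [Fin.sum_univ_one, Matrix.one_apply_eq] at h00
        have h00' : (starRingEnd ℂ) z₂ * z₂ = 1 := h00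
        have hns : Complex.normSq z₂ = 1 := by
          have : ((Complex.normSq z₂ : ℝ) : ℂ) = 1 := by
            rw [Complex.normSq_eq_conj_mul_self, h00']
          exact_mod_cast this
        rw [Complex.norm_def, hns, Real.sqrt_one]
      have hzb : ‖z₁ - z₂‖ ≤ 2 := by
        have h := norm_sub_le_norm_sub_add_norm_sub z₁ 0 z₂
        simp only [sub_zero, zero_sub, norm_neg] at h
        rw [habs1, habs2] at h
        linarith
      have h1n : (0:ℝ) ≤ 1 / n := by positivity
      have hnpos : (0:ℝ) < n := by exact_mod_cast hn0
      calc 1 / (n:ℝ) * ‖z₁ - z₂‖ ≤ 1 / (n:ℝ) * 2 := by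
            exact mul_le_mul_of_nonneg_left hzb h1n
        _ = 2 / n := by ring
        _ ≤ 4 / n := by gcongr <;> norm_num

    · -- k ≥ 2
      set P₁ := pad hkn (g₁ : Matrix (Fin k) (Fin k) ℂ) with hP₁def
      set P₂ := pad hkn (g₂ : Matrix (Fin k) (Fin k) ℂ) with hP₂def
      obtain ⟨hP₁u, hP₁u'⟩ := pad_unitary hkn g₁.2
      obtain ⟨hP₂u, hP₂u'⟩ := pad_unitary hkn g₂.2
      set kk : Fin n := ⟨k-1, by omega⟩ with hkk
      set v₁ : Fin n → ℂ := fun i => P₁ i kk with hv₁def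
      set v₂ : Fin n → ℂ := fun i => P₂ i kk with hv₂def
      have hcol : ∀ (P : Matrix (Fin n) (Fin n) ℂ), (Pᴴ * P = 1) →
          star (fun i => P i kk) ⬝ᵥ (fun i => P i kk) = 1 := by
        intro P hP
        have h := congrFun (congrFun hP kk) kk
        rw [Matrix.mul_apply] at h
        rw [show (1 : Matrix (Fin n) (Fin n) ℂ) kk kk = 1 from Matrix.one_apply_eq kk] at h
        rw [← h]
        apply Finset.sum_congr rfl
        intro l _
        simp [Matrix.conjTranspose_apply, dotProduct]
      have hv₁ : star v₁ ⬝ᵥ v₁ = 1 := hcol P₁ hP₁u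
      have hv₂ : star v₂ ⬝ᵥ v₂ = 1 := hcol P₂ hP₂u
      have hsup₁ : ∀ j : Fin n, k ≤ (j:ℕ) → v₁ j = 0 := by
        intro j hj
        show pad hkn (g₁ : Matrix (Fin k) (Fin k) ℂ) j kk = 0
        have hkkv : (kk:ℕ) = k - 1 := rfl
        simp only [pad, dif_neg (Nat.not_lt.mpr hj)]
        exact if_neg (by omega)
      have hsup₂ : ∀ j : Fin n, k ≤ (j:ℕ) → v₂ j = 0 := by
        intro j hj
        show pad hkn (g₂ : Matrix (Fin k) (Fin k) ℂ) j kk = 0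
        have hkkv : (kk:ℕ) = k - 1 := rfl
        simp only [pad, dif_neg (Nat.not_lt.mpr hj)]
        exact if_neg (by omega)
      obtain ⟨u₁, u₂, hu₁, hu₂, hsu₁, hsu₂, hmap⟩ :=
        exists_two_refl hk2 hkn v₁ v₂ hv₁ hv₂ hsup₁ hsup₂
      have hW₁ : (hh u₁)ᴴ * hh u₁ = 1 := by rw [hh_conjTranspose]; exact hh_mul_self hu₁
      have hW₂ : (hh u₂)ᴴ * hh u₂ = 1 := by rw [hh_conjTranspose]; exact hh_mul_self hu₂
      set c := P₂ᴴ * (hh u₂ * (hh u₁ * P₁)) with hcdef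
      have hcc : cᴴ * c = 1 := by
        rw [hcdef]
        apply uniMul
        · rw [conjTranspose_conjTranspose]; exact hP₂u'
        · exact uniMul hW₂ (uniMul hW₁ hP₁u)
      have hcolact : ∀ j : Fin n, k - 1 ≤ (j:ℕ) →
          c *ᵥ Pi.single j 1 = Pi.single j 1 := by
        intro j hj
        rcases (by omega : (j:ℕ) = k - 1 ∨ k ≤ (j:ℕ)) with hjk | hjk
        · have hkkv : (kk:ℕ) = k - 1 := rfl
          have hjkk : j = kk := by
            apply Fin.ext
            omega
          rw [hjkk]
          have e₁ : P₁ *ᵥ Pi.single kk 1 = v₁ := by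
            rw [Matrix.mulVec_single_one]
            funext i
            rfl
          have e₂ : P₂ *ᵥ Pi.single kk 1 = v₂ := by
            rw [Matrix.mulVec_single_one]
            funext i
            rfl
          rw [hcdef, ← Matrix.mulVec_mulVec, ← Matrix.mulVec_mulVec, ← Matrix.mulVec_mulVec,
            e₁, hmap, ← e₂, Matrix.mulVec_mulVec, hP₂u, Matrix.one_mulVec]
        · have e₁ : P₁ *ᵥ Pi.single j 1 = Pi.single j 1 := by
            rw [Matrix.mulVec_single_one]
            funext i
            rw [Matrix.col_apply, hP₁def]
            simp only [pad]
            rcases Nat.lt_or_ge (i:ℕ) k with hi | hi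
            · rw [dif_pos hi, dif_neg (by omega)]
              rw [Pi.single_apply, if_neg (by intro h; rw [h] at hi; omega)]
            · rw [dif_neg (Nat.not_lt.mpr hi), Pi.single_apply]
              by_cases hij : (i:ℕ) = (j:ℕ)
              · rw [if_pos hij, if_pos (Fin.ext hij)]
              · rw [if_neg hij, if_neg (fun h => hij (congrArg Fin.val h))]
          have e₂ : ∀ u : Fin n → ℂ, (∀ l : Fin n, k ≤ (l:ℕ) → u l = 0) →
              hh u *ᵥ Pi.single j 1 = Pi.single j 1 := by
            intro u hsupu
            rw [hh_mulVec, dotProduct_single]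
            have h0 : star u j = (0:ℂ) := by rw [Pi.star_apply, hsupu j hjk, star_zero]
            rw [h0]
            simp
          have e₃ : P₂ᴴ *ᵥ Pi.single j 1 = Pi.single j 1 := by
            rw [Matrix.mulVec_single_one]
            funext i
            rw [Matrix.col_apply, Matrix.conjTranspose_apply, hP₂def]
            simp only [pad]
            rw [dif_neg (by omega)]
            rw [Pi.single_apply]
            by_cases hij : (i:ℕ) = (j:ℕ)
            · rw [if_pos (by omega), if_pos (Fin.ext hij)]
              simp
            · rw [if_neg (by omega), if_neg (fun h => hij (congrArg Fin.val h))]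
              simp
          rw [hcdef, ← Matrix.mulVec_mulVec, ← Matrix.mulVec_mulVec, ← Matrix.mulVec_mulVec,
            e₁, e₂ u₁ hsu₁, e₂ u₂ hsu₂, e₃]
      have hcols : ∀ j : Fin n, k - 1 ≤ (j:ℕ) → ∀ i : Fin n,
          c i j = if i = j then 1 else 0 := by
        intro j hj i
        have hthis := congrFun (hcolact j hj) i
        simp only [Matrix.mulVec_single_one, Matrix.col_apply] at hthis
        rw [hthis, Pi.single_apply]
      obtain ⟨hmat, hmatuni, hmatpad⟩ :=
        block_extract (le_trans (Nat.sub_le k 1) hkn) c hcc hcols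
      set H2 : Matrix.unitaryGroup (Fin (k-1)) ℂ := ⟨hmat, hmatuni⟩ with hH2def
      refine ⟨1, H2, ?_⟩
      have hc1 : ((1 : Matrix.unitaryGroup (Fin (k-1)) ℂ) : Matrix (Fin (k-1)) (Fin (k-1)) ℂ)
          = 1 := rfl
      have hc2 : (H2 : Matrix (Fin (k-1)) (Fin (k-1)) ℂ) = hmat := rfl
      rw [hc1, pad_one, Matrix.mul_one, hc2, hmatpad]
      have hPc : P₂ * c = hh u₂ * (hh u₁ * P₁) := by
        rw [hcdef, ← Matrix.mul_assoc, hP₂u', Matrix.one_mul]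
      have h22 : hh u₂ * hh u₂ = 1 := hh_mul_self hu₂
      have hX : P₁ - P₂ * c = (hh u₂ * (hh u₂ - hh u₁)) * P₁ := by
        rw [hPc, Matrix.mul_sub, h22, Matrix.sub_mul, Matrix.one_mul, Matrix.mul_assoc]
      rw [hX]
      rw [trNorm_unitary_right hP₁u hP₁u']
      rw [trNorm_unitary_left hW₂]
      have hdiff : hh u₂ - hh u₁ = (2:ℂ) • (outer2 u₁ u₁ - outer2 u₂ u₂) := by
        rw [hh, hh]; module
      rw [hdiff, trNorm]
      have hkey := key_bound' hu₁ hu₂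
      have h1n : (0:ℝ) ≤ 1 / n := by positivity
      calc 1 / (n:ℝ) * (mAbs ((2:ℂ) • (outer2 u₁ u₁ - outer2 u₂ u₂))).trace.re
          ≤ 1 / (n:ℝ) * 4 := mul_le_mul_of_nonneg_left hkey h1n
        _ = 4 / n := by ring
  obtain ⟨H1, H2, hbound⟩ := main
  refine le_trans (ciInf_le ?_ H1) (le_trans (ciInf_le ?_ H2) hbound)
  · exact ⟨0, by rintro x ⟨h₁, rfl⟩; exact le_ciInf fun h₂ => trNorm_nonneg _⟩
  · exact ⟨0, by rintro x ⟨h₂, rfl⟩; exact trNorm_nonneg _⟩
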